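/- Chromatic particle codes are unique: for any two points x, y ∈ ℝ², code(x) = code(y) if and only if x and y induce the same weak ordering of distances to the generators, i.e., for all indices i, j, dist(x,p_i) ≤ dist(x,p_j) if and only if dist(y,p_i) ≤ dist(y,p_j). Hence two points belong to the same spatial particle exactly when their chromatic codes coincide. -/

import Mathlib

noncomputable section

open Metric

abbrev Pt : Type := EuclideanSpace ℝ (Fin 2)

/-- The chromatic code of a point `x` with respect to generators `p`:
`code p x i` = #{j ≠ i : dist(x,p j) > dist(x,p i)} + (1/2)·#{j ≠ i : dist(x,p j) = dist(x,p i)}. -/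
def code {n : ℕ} (p : Fin n → Pt) (x : Pt) (i : Fin n) : ℚ :=
  (Set.ncard {j : Fin n | j ≠ i ∧ dist x (p i) < dist x (p j)} : ℚ)
  + (1/2) * (Set.ncard {j : Fin n | j ≠ i ∧ dist x (p j) = dist x (p i)} : ℚ)

/-- `{i,j}` is a tie of `x`. -/
def Tie {n : ℕ} (p : Fin n → Pt) (x : Pt) (i j : Fin n) : Prop :=
  i ≠ j ∧ dist x (p i) = dist x (p j)

/-- A cell point has no ties. -/
def CellPoint {n : ℕ} (p : Fin n → Pt) (x : Pt) : Prop :=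
  ∀ i j, ¬ Tie p x i j

/-- An edge point has exactly one (unordered) tie. -/
def EdgePoint {n : ℕ} (p : Fin n → Pt) (x : Pt) : Prop :=
  ∃ i j, Tie p x i j ∧ ∀ u v, Tie p x u v → ({u, v} : Set (Fin n)) = {i, j}

/-- A 2-I vertex point has exactly two ties, forming two disjoint pairs. -/
def Vertex2I {n : ℕ} (p : Fin n → Pt) (x : Pt) : Prop :=
  ∃ i j u v : Fin n, i ≠ j ∧ i ≠ u ∧ i ≠ v ∧ j ≠ u ∧ j ≠ v ∧ u ≠ v ∧
    Tie p x i j ∧ Tie p x u v ∧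
    ∀ a b, Tie p x a b → ({a, b} : Set (Fin n)) = {i, j} ∨ ({a, b} : Set (Fin n)) = {u, v}

/-- A 3-I vertex point: its ties are exactly the three pairs contained in some
3-element subset `{i,j,k}`. -/
def Vertex3I {n : ℕ} (p : Fin n → Pt) (x : Pt) : Prop :=
  ∃ i j k : Fin n, i ≠ j ∧ i ≠ k ∧ j ≠ k ∧
    ∀ a b, Tie p x a b ↔
      (a ≠ b ∧ a ∈ ({i, j, k} : Set (Fin n)) ∧ b ∈ ({i, j, k} : Set (Fin n)))

/-- The chromatic distance between two points. -/
def chromDist {n : ℕ} (p : Fin n → Pt) (x y : Pt) : ℚ :=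
  ∑ i, |code p x i - code p y i|

/-- The spatial particle of `x`: the fiber of the chromatic code through `x`. -/
def particle {n : ℕ} (p : Fin n → Pt) (x : Pt) : Set Pt :=
  {y | code p y = code p x}

/-- The generators are in general position: every point of the plane is one of the four
particle types, and perpendicular bisectors of distinct pairs are distinct non-parallel
lines (any two of them meet in exactly one point). -/
def GeneralPosition {n : ℕ} (p : Fin n → Pt) : Prop :=
  (∀ x : Pt, CellPoint p x ∨ EdgePoint p x ∨ Vertex2I p x ∨ Vertex3I p x) ∧
  (∀ i j u v : Fin n, i ≠ j → u ≠ v → ({i, j} : Set (Fin n)) ≠ {u, v} →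
    ∃! x : Pt, dist x (p i) = dist x (p j) ∧ dist x (p u) = dist x (p v))

/-- The set `{0,1,…,n−1}` viewed inside `ℚ`. -/
def codeRange (n : ℕ) : Set ℚ := {q | ∃ m : ℕ, m < n ∧ q = m}

lemma code_eq_of_dist_eq {n : ℕ} (p : Fin n → Pt) (x : Pt) {i j : Fin n}
    (h : dist x (p i) = dist x (p j)) : code p x i = code p x j := by
  unfold code
  have h1 : {k : Fin n | k ≠ i ∧ dist x (p i) < dist x (p k)}
      = {k : Fin n | k ≠ j ∧ dist x (p j) < dist x (p k)} := by
    ext k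
    simp only [Set.mem_setOf_eq, h]
    constructor
    · rintro ⟨-, hlt⟩
      exact ⟨fun hkj => by simp [hkj] at hlt, hlt⟩
    · rintro ⟨-, hlt⟩
      refine ⟨fun hki => ?_, hlt⟩
      rw [hki, ← h] at hlt; exact lt_irrefl _ hlt
  have h2 : ({k : Fin n | k ≠ i ∧ dist x (p k) = dist x (p i)}).ncard
      = ({k : Fin n | k ≠ j ∧ dist x (p k) = dist x (p j)}).ncard := by
    set S : Set (Fin n) := {k : Fin n | dist x (p k) = dist x (p i)} with hS
    have e1 : {k : Fin n | k ≠ i ∧ dist x (p k) = dist x (p i)} = S \ {i} := by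
      ext k; simp [hS, and_comm]
    have e2 : {k : Fin n | k ≠ j ∧ dist x (p k) = dist x (p j)} = S \ {j} := by
      ext k; simp [hS, and_comm, h]
    rw [e1, e2,
      Set.ncard_sdiff_singleton_of_mem (s := S) (by simp [hS]),
      Set.ncard_sdiff_singleton_of_mem (s := S) (by simp [hS, h])]
  rw [h1, h2]

lemma code_lt_of_dist_lt {n : ℕ} (p : Fin n → Pt) (x : Pt) {i j : Fin n}
    (h : dist x (p i) < dist x (p j)) : code p x j < code p x i := by
  set A : Set (Fin n) := {k : Fin n | k ≠ i ∧ dist x (p i) < dist x (p k)} with hA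
  set B : Set (Fin n) := {k : Fin n | k ≠ j ∧ dist x (p j) < dist x (p k)} with hB
  set E : Set (Fin n) := {k : Fin n | k ≠ j ∧ dist x (p k) = dist x (p j)} with hE
  have hdisj : Disjoint B E := by
    rw [Set.disjoint_left]
    rintro k ⟨-, hlt⟩ ⟨-, heq⟩
    rw [heq] at hlt; exact lt_irrefl _ hlt
  have hjB : j ∉ B := by simp [hB]
  have hjE : j ∉ E := by simp [hE]
  have hsub : insert j (B ∪ E) ⊆ A := by
    rintro k hk
    rcases hk with rfl | hk
    · exact ⟨fun hji => by rw [hji] at h; exact lt_irrefl _ h, h⟩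
    · rcases hk with ⟨hkj, hlt⟩ | ⟨hkj, heq⟩
      · exact ⟨fun hki => by rw [hki] at hlt; exact (lt_irrefl _ (h.trans hlt)),
          h.trans hlt⟩
      · refine ⟨fun hki => ?_, heq ▸ h⟩
        rw [hki] at heq; exact absurd heq (ne_of_lt h)
    
  have hcard : B.ncard + E.ncard + 1 ≤ A.ncard := by
    have h1 : (insert j (B ∪ E)).ncard = B.ncard + E.ncard + 1 := by
      rw [Set.ncard_insert_of_notMem (by simp [hjB, hjE])
        ((Set.toFinite B).union (Set.toFinite E)),
        Set.ncard_union_eq hdisj (Set.toFinite B) (Set.toFinite E)]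
    rw [← h1]
    exact Set.ncard_le_ncard hsub (Set.toFinite A)
  unfold code
  rw [← hA, ← hB, ← hE]
  have hEq : (1/2 : ℚ) * (E.ncard : ℚ) ≤ (E.ncard : ℚ) := by
    have : (0:ℚ) ≤ (E.ncard : ℚ) := Nat.cast_nonneg _
    linarith
  have hnn : (0:ℚ) ≤ (1/2 : ℚ) *
      (({k : Fin n | k ≠ i ∧ dist x (p k) = dist x (p i)}).ncard : ℚ) := by
    positivity
  have hcQ : (B.ncard : ℚ) + (E.ncard : ℚ) + 1 ≤ (A.ncard : ℚ) := by
    exact_mod_cast hcard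
  linarith

lemma dist_le_iff_code {n : ℕ} (p : Fin n → Pt) (x : Pt) (i j : Fin n) :
    dist x (p i) ≤ dist x (p j) ↔ code p x j ≤ code p x i := by
  constructor
  · intro h
    rcases h.lt_or_eq with hlt | heq
    · exact (code_lt_of_dist_lt p x hlt).le
    · exact (code_eq_of_dist_eq p x heq).ge
  · intro h
    by_contra hc
    push_neg at hc
    exact absurd h (not_le.mpr (code_lt_of_dist_lt p x hc))

/-- chromatic particle codes are unique: two points have the same chromatic
code if and only if they induce the same weak ordering of distances to the generators,
i.e. they belong to the same spatial particle. -/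
theorem particle_codes_unique {n : ℕ} (hn : 2 ≤ n) (p : Fin n → Pt)
    (hp : Function.Injective p) :
    ∀ x y : Pt, code p x = code p y ↔
      ∀ i j, (dist x (p i) ≤ dist x (p j) ↔ dist y (p i) ≤ dist y (p j)) := by
  intro x y
  constructor
  · intro h i j
    rw [dist_le_iff_code p x i j, dist_le_iff_code p y i j, h]
  · intro h
    funext i
    have hlt : ∀ j k, dist x (p j) < dist x (p k) ↔ dist y (p j) < dist y (p k) := by
      intro j k
      rw [lt_iff_not_ge, lt_iff_not_ge, h k j]
    have heq : ∀ j k, (dist x (p j) = dist x (p k)) ↔ (dist y (p j) = dist y (p k)) := by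
      intro j k
      constructor
      · intro e
        exact le_antisymm ((h j k).mp e.le) ((h k j).mp e.ge)
      · intro e
        exact le_antisymm ((h j k).mpr e.le) ((h k j).mpr e.ge)
    unfold code
    have e1 : {j : Fin n | j ≠ i ∧ dist x (p i) < dist x (p j)}
        = {j : Fin n | j ≠ i ∧ dist y (p i) < dist y (p j)} := by
      ext j; simp [hlt i j]
    have e2 : {j : Fin n | j ≠ i ∧ dist x (p j) = dist x (p i)}
        = {j : Fin n | j ≠ i ∧ dist y (p j) = dist y (p i)} := by
      ext j; simp [heq j i]
    rw [e1, e2]
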